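/- Let v : [0,1] → ℝ satisfy L' ≤ |v'(q)| ≤ L for positive constants L', L. Then n ∫₀^1 |v'(q)| H(q) dq = Θ(log n), where H(q) = ∫₀^q (n−1)(1−t)^(n−2) t · ((1/t)∫₀^t ((1−x)^(n−1) + (n−1)(1−x)^(n−2) x) dx) / ((1−t)^(n−1) + (n−1)(1−t)^(n−2) t) dt. -/

import Mathlib

open intervalIntegral MeasureTheory Set

/-- The distribution-free part of the total effort of a two-contestant winner-take-all
contest among `n` registered contestants:
`H(q) = ∫₀^q (n−1)(1−t)^(n−2) t · ((1/t)∫₀^t ((1−x)^(n−1) + (n−1)(1−x)^(n−2) x) dx)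
  / ((1−t)^(n−1) + (n−1)(1−t)^(n−2) t) dt`. -/
noncomputable def Htwo (n : ℕ) (q : ℝ) : ℝ :=
  ∫ t in (0:ℝ)..q,
    (n - 1 : ℝ) * (1 - t) ^ (n - 2) * t *
      ((1 / t) * ∫ x in (0:ℝ)..t, ((1 - x) ^ (n - 1) + (n - 1 : ℝ) * (1 - x) ^ (n - 2) * x)) /
      ((1 - t) ^ (n - 1) + (n - 1 : ℝ) * (1 - t) ^ (n - 2) * t)

/-- inner density -/
noncomputable def pf (n : ℕ) (x : ℝ) : ℝ :=
  (1 - x) ^ (n - 1) + ((n : ℝ) - 1) * (1 - x) ^ (n - 2) * x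

/-- closed form of the inner integral -/
noncomputable def Ff (n : ℕ) (t : ℝ) : ℝ :=
  2 * (1 - (1 - t) ^ n) / n - t * (1 - t) ^ (n - 1)

/-- simplified integrand of Htwo -/
noncomputable def Gg (n : ℕ) (t : ℝ) : ℝ :=
  ((n : ℝ) - 1) * Ff n t / (1 + ((n : ℝ) - 2) * t)

lemma pf_cont (n : ℕ) : Continuous (pf n) := by
  unfold pf; fun_prop

lemma Ff_hasDerivAt (n : ℕ) (hn : 2 ≤ n) (t : ℝ) : HasDerivAt (Ff n) (pf n t) t := by
  have h1 : HasDerivAt (fun t : ℝ => (1 - t) ^ n)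
      ((n : ℝ) * (1 - t) ^ (n - 1) * (-1)) t := by
    exact (((hasDerivAt_id t).const_sub 1).pow n)
  have h2 : HasDerivAt (fun t : ℝ => (1 - t) ^ (n - 1))
      ((↑(n-1) : ℝ) * (1 - t) ^ (n - 1 - 1) * (-1)) t := by
    exact (((hasDerivAt_id t).const_sub 1).pow (n-1))
  have h3 : HasDerivAt (fun t : ℝ => t * (1 - t) ^ (n - 1))
      (1 * (1 - t) ^ (n - 1) + t * ((↑(n-1) : ℝ) * (1 - t) ^ (n - 1 - 1) * (-1))) t :=
    (hasDerivAt_id t).mul h2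
  have h4 : HasDerivAt (fun t : ℝ => 2 * (1 - (1 - t) ^ n) / (n : ℝ))
      (2 * (0 - (n : ℝ) * (1 - t) ^ (n - 1) * (-1)) / n) t := by
    exact (((hasDerivAt_const t (1:ℝ)).sub h1).const_mul 2).div_const _
  have := h4.sub h3
  refine HasDerivAt.congr_deriv this ?_
  have e1 : n - 1 - 1 = n - 2 := by omega
  have e2 : ((n - 1 : ℕ) : ℝ) = (n : ℝ) - 1 := by
    have : 1 ≤ n := by omega
    push_cast [Nat.cast_sub this]; ring
  have hn0 : (n : ℝ) ≠ 0 := by positivity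
  rw [e1, e2]
  unfold pf
  field_simp
  ring

lemma inner_eq (n : ℕ) (hn : 2 ≤ n) (t : ℝ) :
    ∫ x in (0:ℝ)..t, pf n x = Ff n t := by
  have h := intervalIntegral.integral_eq_sub_of_hasDerivAt
    (f := Ff n) (f' := pf n) (a := 0) (b := t)
    (fun x _ => Ff_hasDerivAt n hn x) ((pf_cont n).intervalIntegrable 0 t)
  have h0 : Ff n 0 = 0 := by simp [Ff]
  rw [h, h0, sub_zero]

lemma denom_pos (n : ℕ) (hn : 2 ≤ n) {t : ℝ} (ht : 0 ≤ t) :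
    0 < 1 + ((n : ℝ) - 2) * t := by
  have h2 : (2:ℝ) ≤ n := by exact_mod_cast hn
  nlinarith

lemma pf_nonneg (n : ℕ) (hn : 2 ≤ n) {x : ℝ} (hx0 : 0 ≤ x) (hx1 : x ≤ 1) :
    0 ≤ pf n x := by
  have h2 : (2:ℝ) ≤ n := by exact_mod_cast hn
  have h1 : (0:ℝ) ≤ 1 - x := by linarith
  unfold pf
  have q1 := pow_nonneg h1 (n-1)
  have q2 := pow_nonneg h1 (n-2)
  nlinarith [mul_nonneg (mul_nonneg (by linarith : (0:ℝ) ≤ (n:ℝ)-1) q2) hx0]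

lemma Ff_nonneg (n : ℕ) (hn : 2 ≤ n) {t : ℝ} (ht0 : 0 ≤ t) (ht1 : t ≤ 1) :
    0 ≤ Ff n t := by
  rw [← inner_eq n hn t]
  exact intervalIntegral.integral_nonneg ht0
    (fun u hu => pf_nonneg n hn hu.1 (le_trans hu.2 ht1))

lemma Ff_le (n : ℕ) (hn : 2 ≤ n) {t : ℝ} (ht0 : 0 ≤ t) (ht1 : t ≤ 1) :
    Ff n t ≤ 2 / n := by
  have h2 : (2:ℝ) ≤ n := by exact_mod_cast hn
  have h1 : (0:ℝ) ≤ 1 - t := by linarith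
  have p1 := pow_nonneg h1 n
  have p2 := pow_nonneg h1 (n-1)
  unfold Ff
  have hn0 : (0:ℝ) < n := by linarith
  rw [div_sub' (ne_of_gt hn0), div_le_div_iff₀ hn0 hn0]
  nlinarith [mul_nonneg (le_of_lt hn0) p1,
    mul_nonneg (mul_nonneg (le_of_lt hn0) (mul_nonneg (le_of_lt hn0) ht0)) p2]

lemma Ff_mono (n : ℕ) (hn : 2 ≤ n) {s t : ℝ} (hs : 0 ≤ s) (hst : s ≤ t) (ht : t ≤ 1) :
    Ff n s ≤ Ff n t := by
  have : Ff n t - Ff n s = ∫ x in s..t, pf n x := by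
    rw [intervalIntegral.integral_eq_sub_of_hasDerivAt
      (fun x _ => Ff_hasDerivAt n hn x) ((pf_cont n).intervalIntegrable s t)]
  nlinarith [intervalIntegral.integral_nonneg (f := pf n) (μ := volume) hst
    (fun u hu => pf_nonneg n hn (le_trans hs hu.1) (le_trans hu.2 ht))]

lemma Ff_ge (n : ℕ) (hn : 2 ≤ n) {t : ℝ} (ht : 1/(2*(n:ℝ)) ≤ t) (ht1 : t ≤ 1) :
    1/(4*(n:ℝ)) ≤ Ff n t := by
  have h2 : (2:ℝ) ≤ n := by exact_mod_cast hn
  have hn0 : (0:ℝ) < n := by linarith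
  have hhalf : ∀ x ∈ Icc (0:ℝ) (1/(2*(n:ℝ))), (1:ℝ)/2 ≤ pf n x := by
    intro x hx
    obtain ⟨hx0, hxu⟩ := hx
    have hxle : x ≤ 1/(2*(n:ℝ)) := hxu
    have hx1 : x ≤ 1 := by
      calc x ≤ 1/(2*(n:ℝ)) := hxle
        _ ≤ 1 := by rw [div_le_one (by linarith)]; linarith
    have hb := one_add_mul_le_pow (a := -x) (by linarith) (n - 1)
    have e2 : ((n - 1 : ℕ) : ℝ) = (n : ℝ) - 1 := by
      have : 1 ≤ n := by omega
      push_cast [Nat.cast_sub this]; ring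
    rw [e2] at hb
    have key : 1 - ((n:ℝ) - 1) * x ≤ (1 - x) ^ (n-1) := by
      calc 1 - ((n:ℝ)-1) * x = 1 + ((n:ℝ)-1) * (-x) := by ring
        _ ≤ (1 + -x) ^ (n-1) := hb
        _ = (1 - x) ^ (n-1) := by ring_nf
    have hxn : ((n:ℝ) - 1) * x ≤ 1/2 := by
      have : ((n:ℝ) - 1) * x ≤ ((n:ℝ)) * (1/(2*(n:ℝ))) := by
        apply mul_le_mul (by linarith) hxle hx0 (by linarith)
      rw [mul_one_div, mul_comm] at this
      calc ((n:ℝ)-1)*x ≤ (n:ℝ) * x := by nlinarith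
        _ ≤ 1/2 := by
          calc (n:ℝ)*x ≤ (n:ℝ)*(1/(2*(n:ℝ))) := by nlinarith
            _ = 1/2 := by field_simp
    have hsec : 0 ≤ ((n : ℝ) - 1) * (1 - x) ^ (n - 2) * x := by
      have hq : (0:ℝ) ≤ 1 - x := by linarith
      have hq2 := pow_nonneg hq (n-2)
      have : (0:ℝ) ≤ (n:ℝ)-1 := by linarith
      positivity
    unfold pf
    linarith
  -- Ff (1/(2n)) ≥ 1/(4n)
  have hF1 : 1/(4*(n:ℝ)) ≤ Ff n (1/(2*(n:ℝ))) := by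
    rw [← inner_eq n hn]
    have hle : (0:ℝ) ≤ 1/(2*(n:ℝ)) := by positivity
    calc 1/(4*(n:ℝ)) = (1/(2*(n:ℝ)) - 0) • ((1:ℝ)/2) := by
          rw [smul_eq_mul]; field_simp; ring
      _ = ∫ _x in (0:ℝ)..(1/(2*(n:ℝ))), ((1:ℝ)/2) := (intervalIntegral.integral_const _).symm
      _ ≤ ∫ x in (0:ℝ)..(1/(2*(n:ℝ))), pf n x := by
          apply intervalIntegral.integral_mono_on hle
            (intervalIntegrable_const) ((pf_cont n).intervalIntegrable _ _)
          exact fun x hx => hhalf x hx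
  exact le_trans hF1 (Ff_mono n hn (by positivity) ht ht1)

lemma Gg_contOn (n : ℕ) (hn : 2 ≤ n) : ContinuousOn (Gg n) (Icc 0 1) := by
  apply ContinuousOn.div
  · unfold Ff; fun_prop
  · fun_prop
  · intro t ht
    exact ne_of_gt (denom_pos n hn ht.1)

lemma Gg_nonneg (n : ℕ) (hn : 2 ≤ n) {t : ℝ} (ht0 : 0 ≤ t) (ht1 : t ≤ 1) :
    0 ≤ Gg n t := by
  have h2 : (2:ℝ) ≤ n := by exact_mod_cast hn
  have hF := Ff_nonneg n hn ht0 ht1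
  have hD := denom_pos n hn ht0
  unfold Gg
  exact div_nonneg (mul_nonneg (by linarith) hF) hD.le

lemma Gg_le_two (n : ℕ) (hn : 2 ≤ n) {t : ℝ} (ht0 : 0 ≤ t) (ht1 : t ≤ 1) :
    Gg n t ≤ 2 := by
  have h2 : (2:ℝ) ≤ n := by exact_mod_cast hn
  have hF0 := Ff_nonneg n hn ht0 ht1
  have hFle := Ff_le n hn ht0 ht1
  have hden := denom_pos n hn ht0
  have hden1 : (1:ℝ) ≤ 1 + ((n:ℝ) - 2) * t := by nlinarith
  unfold Gg
  rw [div_le_iff₀ hden]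
  have : ((n:ℝ) - 1) * Ff n t ≤ ((n:ℝ) - 1) * (2 / n) := by
    apply mul_le_mul_of_nonneg_left hFle (by linarith)
  have h1 : ((n:ℝ) - 1) * (2 / n) ≤ 2 := by
    rw [mul_div_assoc', div_le_iff₀ (by linarith : (0:ℝ) < n)]
    ring_nf; nlinarith
  nlinarith

lemma Gg_le_inv (n : ℕ) (hn : 2 ≤ n) {t : ℝ} (ht0 : 0 < t) (ht1 : t ≤ 1) :
    Gg n t ≤ 4 / n * (1 / t) := by
  have h2 : (2:ℝ) ≤ n := by exact_mod_cast hn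
  have hF0 := Ff_nonneg n hn ht0.le ht1
  have hFle := Ff_le n hn ht0.le ht1
  have hden := denom_pos n hn ht0.le
  have hdenge : (n:ℝ) * t / 2 ≤ 1 + ((n:ℝ) - 2) * t := by nlinarith
  have hnum : ((n:ℝ) - 1) * Ff n t ≤ 2 := by
    have : ((n:ℝ) - 1) * Ff n t ≤ ((n:ℝ) - 1) * (2 / n) :=
      mul_le_mul_of_nonneg_left hFle (by linarith)
    have h1 : ((n:ℝ) - 1) * (2 / n) ≤ 2 := by
      rw [mul_div_assoc', div_le_iff₀ (by linarith : (0:ℝ) < n)]; nlinarith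
    linarith
  have hnum0 : 0 ≤ ((n:ℝ) - 1) * Ff n t := mul_nonneg (by linarith) hF0
  have hrhs : (0:ℝ) < (n:ℝ) * t := by positivity
  have key : ((n:ℝ) - 1) * Ff n t / (1 + ((n:ℝ) - 2) * t) ≤ 4 / ((n:ℝ) * t) := by
    rw [div_le_div_iff₀ hden hrhs]
    nlinarith [mul_le_mul_of_nonneg_right hnum hrhs.le]
  calc Gg n t ≤ 4 / ((n:ℝ) * t) := key
    _ = 4 / n * (1/t) := by
        rw [div_mul_div_comm, mul_one]

lemma Gg_ge (n : ℕ) (hn : 2 ≤ n) {t : ℝ} (ht0 : 1/(2*(n:ℝ)) ≤ t) (ht1 : t ≤ 1/2) :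
    1/(24*(n:ℝ)) * (1/t) ≤ Gg n t := by
  have h2 : (2:ℝ) ≤ n := by exact_mod_cast hn
  have htpos : 0 < t := lt_of_lt_of_le (by positivity) ht0
  have hFge := Ff_ge n hn ht0 (by linarith)
  have hden := denom_pos n hn htpos.le
  have hnt : 1 ≤ 2 * ((n:ℝ) * t) := by
    rw [div_le_iff₀ (by positivity : (0:ℝ) < 2*(n:ℝ))] at ht0; nlinarith
  have hdenle : 1 + ((n:ℝ) - 2) * t ≤ 3 * ((n:ℝ) * t) := by nlinarith
  have hnumge : ((n:ℝ)) / (8 * n) ≤ ((n:ℝ) - 1) * Ff n t := by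
    have : ((n:ℝ)) / 2 * (1/(4*(n:ℝ))) ≤ ((n:ℝ) - 1) * Ff n t := by
      apply mul_le_mul (by linarith) hFge (by positivity) (by linarith)
    calc ((n:ℝ)) / (8*n) = (n:ℝ)/2 * (1/(4*(n:ℝ))) := by ring
      _ ≤ _ := this
  unfold Gg
  rw [le_div_iff₀ hden]
  have hn0 : (n:ℝ) ≠ 0 := by positivity
  have hq : ((n:ℝ))/(8*n) = 1/8 := by rw [div_eq_div_iff (by positivity) (by norm_num)]; ring
  rw [hq] at hnumge
  calc 1/(24*(n:ℝ)) * (1/t) * (1 + ((n:ℝ)-2)*t) ≤ 1/(24*(n:ℝ)) * (1/t) * (3*((n:ℝ)*t)) := by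
        apply mul_le_mul_of_nonneg_left hdenle (by positivity)
    _ = 1/8 := by field_simp; ring
    _ ≤ ((n:ℝ) - 1) * Ff n t := hnumge

lemma integrand_eq (n : ℕ) (hn : 2 ≤ n) {t : ℝ} (ht0 : 0 < t) (ht1 : t < 1) :
    ((n:ℝ) - 1) * (1 - t) ^ (n - 2) * t *
      ((1 / t) * ∫ x in (0:ℝ)..t, ((1 - x) ^ (n - 1) + ((n:ℝ) - 1) * (1 - x) ^ (n - 2) * x)) /
      ((1 - t) ^ (n - 1) + ((n:ℝ) - 1) * (1 - t) ^ (n - 2) * t) = Gg n t := by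
  rw [show (∫ x in (0:ℝ)..t, ((1 - x) ^ (n - 1) + ((n:ℝ) - 1) * (1 - x) ^ (n - 2) * x))
      = Ff n t from inner_eq n hn t]
  have ha : (0:ℝ) < 1 - t := by linarith
  have hpow : (0:ℝ) < (1 - t) ^ (n - 2) := pow_pos ha _
  have hsplit : (1 - t) ^ (n - 1) = (1 - t) ^ (n - 2) * (1 - t) := by
    rw [← pow_succ]
    congr 1
    omega
  have h2 : (2:ℝ) ≤ n := by exact_mod_cast hn
  have hden2 := denom_pos n hn ht0.le
  rw [hsplit]
  have hdenfac : (1 - t) ^ (n - 2) * (1 - t) + ((n:ℝ) - 1) * (1 - t) ^ (n - 2) * t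
      = (1 - t) ^ (n - 2) * (1 + ((n:ℝ) - 2) * t) := by ring
  rw [hdenfac]
  unfold Gg
  rw [div_eq_div_iff (by positivity) (ne_of_gt hden2)]
  field_simp

lemma Htwo_eq (n : ℕ) (hn : 2 ≤ n) {q : ℝ} (hq0 : 0 ≤ q) (hq1 : q ≤ 1) :
    Htwo n q = ∫ t in (0:ℝ)..q, Gg n t := by
  unfold Htwo
  apply intervalIntegral.integral_congr_ae
  have h1 : {(1:ℝ)}ᶜ ∈ MeasureTheory.ae (volume : MeasureTheory.Measure ℝ) :=
    MeasureTheory.compl_mem_ae_iff.mpr Real.volume_singleton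
  filter_upwards [h1] with x hx hmem
  rw [Set.uIoc_of_le hq0] at hmem
  have hx1 : x < 1 := lt_of_le_of_ne (le_trans hmem.2 hq1) (by simpa using hx)
  exact integrand_eq n hn hmem.1 hx1

lemma GgInt (n : ℕ) (hn : 2 ≤ n) {a b : ℝ} (ha : 0 ≤ a) (hb : b ≤ 1) (hab : a ≤ b) :
    IntervalIntegrable (Gg n) volume a b :=
  ((Gg_contOn n hn).mono (by rw [Set.uIcc_of_le hab]; exact Set.Icc_subset_Icc ha hb)).intervalIntegrable

lemma H1_upper (n : ℕ) (hn : 2 ≤ n) :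
    ∫ t in (0:ℝ)..1, Gg n t ≤ 4/(n:ℝ) * (1 + Real.log ((n:ℝ)/2)) := by
  have h2 : (2:ℝ) ≤ n := by exact_mod_cast hn
  have hn0 : (0:ℝ) < n := by linarith
  have h2n0 : (0:ℝ) < 2/(n:ℝ) := by positivity
  have h2n1 : 2/(n:ℝ) ≤ 1 := by rw [div_le_one hn0]; linarith
  have hsplit : (∫ t in (0:ℝ)..(2/(n:ℝ)), Gg n t) + (∫ t in (2/(n:ℝ))..1, Gg n t)
      = ∫ t in (0:ℝ)..1, Gg n t :=
    intervalIntegral.integral_add_adjacent_intervals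
      (GgInt n hn le_rfl h2n1 h2n0.le) (GgInt n hn h2n0.le le_rfl h2n1)
  have hfirst : (∫ t in (0:ℝ)..(2/(n:ℝ)), Gg n t) ≤ 4/(n:ℝ) := by
    calc (∫ t in (0:ℝ)..(2/(n:ℝ)), Gg n t) ≤ ∫ _t in (0:ℝ)..(2/(n:ℝ)), (2:ℝ) := by
          apply intervalIntegral.integral_mono_on h2n0.le
            (GgInt n hn le_rfl h2n1 h2n0.le) intervalIntegrable_const
          exact fun x hx => Gg_le_two n hn hx.1 (le_trans hx.2 h2n1)
      _ = (2/(n:ℝ) - 0) • (2:ℝ) := intervalIntegral.integral_const _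
      _ = 4/(n:ℝ) := by rw [smul_eq_mul]; ring
  have hcont : ContinuousOn (fun t : ℝ => 4/(n:ℝ) * (1/t)) (Set.uIcc (2/(n:ℝ)) 1) := by
    rw [Set.uIcc_of_le h2n1]
    apply ContinuousOn.mul continuousOn_const
    apply ContinuousOn.div continuousOn_const continuousOn_id
    intro x hx; exact ne_of_gt (lt_of_lt_of_le h2n0 hx.1)
  have hsecond : (∫ t in (2/(n:ℝ))..1, Gg n t) ≤ 4/(n:ℝ) * Real.log ((n:ℝ)/2) := by
    calc (∫ t in (2/(n:ℝ))..1, Gg n t) ≤ ∫ t in (2/(n:ℝ))..1, 4/(n:ℝ) * (1/t) := by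
          apply intervalIntegral.integral_mono_on h2n1
            (GgInt n hn h2n0.le le_rfl h2n1) hcont.intervalIntegrable
          exact fun x hx => Gg_le_inv n hn (lt_of_lt_of_le h2n0 hx.1) hx.2
      _ = 4/(n:ℝ) * ∫ t in (2/(n:ℝ))..1, (1/t) := intervalIntegral.integral_const_mul _ _
      _ = 4/(n:ℝ) * Real.log (1/(2/(n:ℝ))) := by
          rw [integral_one_div]
          · intro h
            rw [Set.uIcc_of_le h2n1] at h
            exact absurd h.1 (by linarith)
      _ = 4/(n:ℝ) * Real.log ((n:ℝ)/2) := by rw [one_div_div]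
  calc (∫ t in (0:ℝ)..1, Gg n t) = _ + _ := hsplit.symm
    _ ≤ 4/(n:ℝ) + 4/(n:ℝ) * Real.log ((n:ℝ)/2) := add_le_add hfirst hsecond
    _ = 4/(n:ℝ) * (1 + Real.log ((n:ℝ)/2)) := by ring

lemma Hhalf_lower (n : ℕ) (hn : 2 ≤ n) :
    1/(24*(n:ℝ)) * Real.log n ≤ ∫ t in (0:ℝ)..(1/2:ℝ), Gg n t := by
  have h2 : (2:ℝ) ≤ n := by exact_mod_cast hn
  have hn0 : (0:ℝ) < n := by linarith
  have ha0 : (0:ℝ) < 1/(2*(n:ℝ)) := by positivity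
  have hah : 1/(2*(n:ℝ)) ≤ 1/2 := by
    rw [div_le_div_iff₀ (by linarith) (by norm_num)]; linarith
  have hh1 : (1/2:ℝ) ≤ 1 := by norm_num
  have hsplit : (∫ t in (0:ℝ)..(1/(2*(n:ℝ))), Gg n t) + (∫ t in (1/(2*(n:ℝ)))..(1/2:ℝ), Gg n t)
      = ∫ t in (0:ℝ)..(1/2:ℝ), Gg n t :=
    intervalIntegral.integral_add_adjacent_intervals
      (GgInt n hn le_rfl (by linarith) ha0.le) (GgInt n hn ha0.le (by norm_num) hah)
  have hfirst : (0:ℝ) ≤ ∫ t in (0:ℝ)..(1/(2*(n:ℝ))), Gg n t :=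
    intervalIntegral.integral_nonneg ha0.le
      (fun u hu => Gg_nonneg n hn hu.1 (by linarith [hu.2]))
  have hcont : ContinuousOn (fun t : ℝ => 1/(24*(n:ℝ)) * (1/t)) (Set.uIcc (1/(2*(n:ℝ))) (1/2:ℝ)) := by
    rw [Set.uIcc_of_le hah]
    apply ContinuousOn.mul continuousOn_const
    apply ContinuousOn.div continuousOn_const continuousOn_id
    intro x hx; exact ne_of_gt (lt_of_lt_of_le ha0 hx.1)
  have hsecond : 1/(24*(n:ℝ)) * Real.log n ≤ ∫ t in (1/(2*(n:ℝ)))..(1/2:ℝ), Gg n t := by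
    calc 1/(24*(n:ℝ)) * Real.log n
        = 1/(24*(n:ℝ)) * Real.log ((1/2:ℝ)/(1/(2*(n:ℝ)))) := by
          have he : ((1/2:ℝ))/(1/(2*(n:ℝ))) = (n:ℝ) := by
            field_simp
          rw [he]
      _ = 1/(24*(n:ℝ)) * ∫ t in (1/(2*(n:ℝ)))..(1/2:ℝ), (1/t) := by
          rw [integral_one_div]
          intro h
          rw [Set.uIcc_of_le hah] at h
          exact absurd h.1 (by linarith)
      _ = ∫ t in (1/(2*(n:ℝ)))..(1/2:ℝ), 1/(24*(n:ℝ)) * (1/t) :=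
          (intervalIntegral.integral_const_mul _ _).symm
      _ ≤ ∫ t in (1/(2*(n:ℝ)))..(1/2:ℝ), Gg n t := by
          apply intervalIntegral.integral_mono_on hah
            hcont.intervalIntegrable (GgInt n hn ha0.le (by norm_num) hah)
          exact fun x hx => Gg_ge n hn hx.1 hx.2
  linarith

theorem stmt_12 (v v' : ℝ → ℝ) (L' L : ℝ) (hL' : 0 < L') (hL : 0 < L)
    (hderiv : ∀ q ∈ Set.Icc (0:ℝ) 1, HasDerivAt v (v' q) q)
    (hlow : ∀ q ∈ Set.Icc (0:ℝ) 1, L' ≤ |v' q|)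
    (hup : ∀ q ∈ Set.Icc (0:ℝ) 1, |v' q| ≤ L) :
    ∃ c C : ℝ, 0 < c ∧ 0 < C ∧
      ∀ n : ℕ, 2 ≤ n →
        c * Real.log n ≤ n * ∫ q in (0:ℝ)..1, |v' q| * Htwo n q ∧
          n * ∫ q in (0:ℝ)..1, |v' q| * Htwo n q ≤ C * Real.log n := by
  refine ⟨L'/48, 10*L, by positivity, by positivity, ?_⟩
  intro n hn
  have h2 : (2:ℝ) ≤ n := by exact_mod_cast hn
  have hn0 : (0:ℝ) < n := by linarith
  set K := ∫ t in (0:ℝ)..(1/2:ℝ), Gg n t with hK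
  set M := ∫ t in (0:ℝ)..1, Gg n t with hM
  have hKM : K ≤ M := by
    have := intervalIntegral.integral_add_adjacent_intervals
      (GgInt n hn le_rfl (by norm_num) (by norm_num))
      (GgInt n hn (by norm_num) le_rfl (by norm_num : (1/2:ℝ) ≤ 1))
    have h2nd : (0:ℝ) ≤ ∫ t in (1/2:ℝ)..1, Gg n t :=
      intervalIntegral.integral_nonneg (by norm_num)
        (fun u hu => Gg_nonneg n hn (by linarith [hu.1]) hu.2)
    rw [hK, hM]; linarith
  have hK0 : 0 ≤ K :=
    intervalIntegral.integral_nonneg (by norm_num)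
      (fun u hu => Gg_nonneg n hn hu.1 (by linarith [hu.2]))
  have hM0 : 0 ≤ M := le_trans hK0 hKM
  -- bounds on Htwo
  have hHle : ∀ q ∈ Icc (0:ℝ) 1, Htwo n q ≤ M := by
    intro q hq
    rw [Htwo_eq n hn hq.1 hq.2]
    have := intervalIntegral.integral_add_adjacent_intervals
      (GgInt n hn le_rfl hq.2 hq.1) (GgInt n hn hq.1 le_rfl hq.2)
    have h2nd : (0:ℝ) ≤ ∫ t in q..1, Gg n t :=
      intervalIntegral.integral_nonneg hq.2
        (fun u hu => Gg_nonneg n hn (le_trans hq.1 hu.1) hu.2)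
    rw [hM]; linarith
  have hH0 : ∀ q ∈ Icc (0:ℝ) 1, 0 ≤ Htwo n q := by
    intro q hq
    rw [Htwo_eq n hn hq.1 hq.2]
    exact intervalIntegral.integral_nonneg hq.1
      (fun u hu => Gg_nonneg n hn hu.1 (le_trans hu.2 hq.2))
  have hHge : ∀ q ∈ Icc (1/2:ℝ) 1, K ≤ Htwo n q := by
    intro q hq
    rw [Htwo_eq n hn (by linarith [hq.1]) hq.2]
    have := intervalIntegral.integral_add_adjacent_intervals
      (GgInt n hn le_rfl (by linarith [hq.2] : (1/2:ℝ) ≤ 1) (by norm_num))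
      (GgInt n hn (by norm_num) hq.2 hq.1)
    have h2nd : (0:ℝ) ≤ ∫ t in (1/2:ℝ)..q, Gg n t :=
      intervalIntegral.integral_nonneg hq.1
        (fun u hu => Gg_nonneg n hn (by linarith [hu.1]) (le_trans hu.2 hq.2))
    rw [hK]; linarith
  -- integrability
  have hswitch : ∀ q ∈ Icc (0:ℝ) 1, v' q = deriv v q :=
    fun q hq => ((hderiv q hq).deriv).symm
  have hHcont : ContinuousOn (Htwo n) (Icc (0:ℝ) 1) := by
    have hGint : IntegrableOn (Gg n) (Set.uIcc (0:ℝ) 1) volume := by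
      rw [Set.uIcc_of_le (by norm_num : (0:ℝ) ≤ 1)]
      exact (Gg_contOn n hn).integrableOn_Icc
    have hprim := intervalIntegral.continuousOn_primitive_interval hGint
    rw [Set.uIcc_of_le (by norm_num : (0:ℝ) ≤ 1)] at hprim
    exact hprim.congr (fun q hq => Htwo_eq n hn hq.1 hq.2)
  have hInt : IntervalIntegrable (fun q => |v' q| * Htwo n q) volume 0 1 := by
    rw [intervalIntegrable_iff_integrableOn_Ioc_of_le (by norm_num : (0:ℝ) ≤ 1)]
    have haem : AEStronglyMeasurable (fun q => |deriv v q| * Htwo n q)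
        (volume.restrict (Set.Ioc (0:ℝ) 1)) := by
      apply AEStronglyMeasurable.mul
      · exact ((measurable_deriv v).abs).aestronglyMeasurable
      · exact ((hHcont.mono Set.Ioc_subset_Icc_self).aemeasurable
          measurableSet_Ioc).aestronglyMeasurable
    have haeq : (fun q => |deriv v q| * Htwo n q)
        =ᵐ[volume.restrict (Set.Ioc (0:ℝ) 1)] (fun q => |v' q| * Htwo n q) := by
      filter_upwards [ae_restrict_mem measurableSet_Ioc] with q hq
      rw [hswitch q (Set.Ioc_subset_Icc_self hq)]
    apply MeasureTheory.Integrable.mono' (g := fun _ => L * M)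
      (integrable_const _) (haem.congr haeq)
    filter_upwards [ae_restrict_mem measurableSet_Ioc] with q hq
    have hq' : q ∈ Icc (0:ℝ) 1 := Set.Ioc_subset_Icc_self hq
    have h1 := hH0 q hq'
    have h2' := hHle q hq'
    have h3 := hup q hq'
    rw [Real.norm_eq_abs, abs_mul, abs_abs, abs_of_nonneg h1]
    exact mul_le_mul h3 h2' h1 (le_trans (abs_nonneg _) h3)
  -- lower bound
  have hIsplit : (∫ q in (0:ℝ)..(1/2:ℝ), |v' q| * Htwo n q)
      + (∫ q in (1/2:ℝ)..1, |v' q| * Htwo n q)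
      = ∫ q in (0:ℝ)..1, |v' q| * Htwo n q :=
    intervalIntegral.integral_add_adjacent_intervals
      (hInt.mono_set (by rw [Set.uIcc_of_le (by norm_num : (0:ℝ) ≤ 1/2),
        Set.uIcc_of_le (by norm_num : (0:ℝ) ≤ 1)]; exact Set.Icc_subset_Icc le_rfl (by norm_num)))
      (hInt.mono_set (by rw [Set.uIcc_of_le (by norm_num : (1/2:ℝ) ≤ 1),
        Set.uIcc_of_le (by norm_num : (0:ℝ) ≤ 1)]; exact Set.Icc_subset_Icc (by norm_num) le_rfl))
  have hfirst0 : (0:ℝ) ≤ ∫ q in (0:ℝ)..(1/2:ℝ), |v' q| * Htwo n q :=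
    intervalIntegral.integral_nonneg (by norm_num)
      (fun u hu => mul_nonneg (abs_nonneg _) (hH0 u ⟨hu.1, by linarith [hu.2]⟩))
  have hsecond : L' * K * (1/2) ≤ ∫ q in (1/2:ℝ)..1, |v' q| * Htwo n q := by
    have hmono : (∫ _q in (1/2:ℝ)..1, L' * K) ≤ ∫ q in (1/2:ℝ)..1, |v' q| * Htwo n q := by
      apply intervalIntegral.integral_mono_on (by norm_num) intervalIntegrable_const
        (hInt.mono_set (by rw [Set.uIcc_of_le (by norm_num : (1/2:ℝ) ≤ 1),
          Set.uIcc_of_le (by norm_num : (0:ℝ) ≤ 1)]; exact Set.Icc_subset_Icc (by norm_num) le_rfl))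
      intro q hq
      have hq' : q ∈ Icc (0:ℝ) 1 := ⟨by linarith [hq.1], hq.2⟩
      exact mul_le_mul (hlow q hq') (hHge q hq) hK0 (abs_nonneg _)
    rw [intervalIntegral.integral_const, smul_eq_mul] at hmono
    calc L' * K * (1/2) = (1 - 1/2) * (L' * K) := by ring
      _ ≤ _ := hmono
  have hlow' : L' * K * (1/2) ≤ ∫ q in (0:ℝ)..1, |v' q| * Htwo n q := by linarith
  have hKlow := Hhalf_lower n hn
  have hlogpos : 0 < Real.log n := Real.log_pos (by linarith)
  constructor
  · -- lower
    have : L' * (1/(24*(n:ℝ)) * Real.log n) * (1/2) ≤ ∫ q in (0:ℝ)..1, |v' q| * Htwo n q := by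
      have := mul_le_mul_of_nonneg_left hKlow hL'.le
      nlinarith
    calc L'/48 * Real.log n = (n:ℝ) * (L' * (1/(24*(n:ℝ)) * Real.log n) * (1/2)) := by
          field_simp; ring
      _ ≤ (n:ℝ) * ∫ q in (0:ℝ)..1, |v' q| * Htwo n q :=
          mul_le_mul_of_nonneg_left this hn0.le
  · -- upper
    have hIle : (∫ q in (0:ℝ)..1, |v' q| * Htwo n q) ≤ L * M := by
      have hmono : (∫ q in (0:ℝ)..1, |v' q| * Htwo n q) ≤ ∫ _q in (0:ℝ)..1, L * M := by
        apply intervalIntegral.integral_mono_on (by norm_num) hInt intervalIntegrable_const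
        intro q hq
        exact mul_le_mul (hup q hq) (hHle q hq) (hH0 q hq)
          (le_trans (abs_nonneg _) (hup q hq))
      rw [intervalIntegral.integral_const, smul_eq_mul] at hmono
      linarith
    have hMle := H1_upper n hn
    have hlog2 : Real.log 2 ≤ Real.log n := Real.log_le_log (by norm_num) h2
    have hlogd : Real.log ((n:ℝ)/2) = Real.log n - Real.log 2 :=
      Real.log_div (by positivity) (by norm_num)
    have hnM : (n:ℝ) * M ≤ 4 * (1 + Real.log n - Real.log 2) := by
      have := mul_le_mul_of_nonneg_left hMle hn0.le
      calc (n:ℝ) * M ≤ (n:ℝ) * (4/(n:ℝ) * (1 + Real.log ((n:ℝ)/2))) := this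
        _ = 4 * (1 + Real.log ((n:ℝ)/2)) := by field_simp
        _ = 4 * (1 + Real.log n - Real.log 2) := by rw [hlogd]; ring
    calc (n:ℝ) * ∫ q in (0:ℝ)..1, |v' q| * Htwo n q ≤ (n:ℝ) * (L * M) :=
          mul_le_mul_of_nonneg_left hIle hn0.le
      _ = L * ((n:ℝ) * M) := by ring
      _ ≤ L * (4 * (1 + Real.log n - Real.log 2)) :=
          mul_le_mul_of_nonneg_left hnM hL.le
      _ ≤ 10*L * Real.log n := by nlinarith [Real.log_two_gt_d9]
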